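/- In ℝ² with the norm ‖(x₁,x₂)‖ equal to ‖·‖₁ when x₁x₂ ≤ 0 and ‖·‖_∞ when x₁x₂ ≥ 0, the vectors x = (1,0) and y = (1,1) are unit vectors, x is Birkhoff-orthogonal to y, and for every t ≥ 1, ‖x + t·y‖ = 1 + t and ‖t·x − y‖ = t. -/
import Mathlib


theorem stmt_14 (N : ℝ × ℝ → ℝ)
    (hN : ∀ z : ℝ × ℝ, N z = if 0 ≤ z.1 * z.2 then max |z.1| |z.2| else |z.1| + |z.2|)
    (x y : ℝ × ℝ) (hx : x = (1, 0)) (hy : y = (1, 1)) :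
    N x = 1 ∧ N y = 1 ∧ (∀ s : ℝ, N (x + s • y) ≥ N x) ∧
    ∀ t : ℝ, 1 ≤ t → N (x + t • y) = 1 + t ∧ N (t • x - y) = t := by
  subst hx hy
  have hNx : N (1, 0) = 1 := by rw [hN]; norm_num
  refine ⟨hNx, by rw [hN]; norm_num, ?_, ?_⟩
  · intro s
    rw [hNx, hN]
    simp only [Prod.mk_add_mk, Prod.smul_mk, smul_eq_mul, mul_one, zero_add]
    rcases le_or_gt 0 s with hs | hs
    · rw [if_pos (by nlinarith)]
      have : (1 : ℝ) ≤ |1 + s| := by rw [abs_of_nonneg (by linarith)]; linarith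
      exact le_max_of_le_left this
    · rcases le_or_gt s (-1) with hs1 | hs1
      · rw [if_pos (by nlinarith)]
        have : (1 : ℝ) ≤ |s| := by rw [abs_of_nonpos (by linarith)]; linarith
        exact le_max_of_le_right this
      · rw [if_neg (by nlinarith)]
        rw [abs_of_nonneg (by linarith), abs_of_nonpos (by linarith)]
        linarith
  · intro t ht
    constructor
    · rw [hN]
      simp only [Prod.mk_add_mk, Prod.smul_mk, smul_eq_mul, mul_one, zero_add]
      rw [if_pos (by nlinarith)]
      rw [abs_of_nonneg (by linarith), abs_of_nonneg (by linarith)]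
      rw [max_eq_left (by linarith)]
    · rw [hN]
      simp only [Prod.smul_mk, Prod.mk_sub_mk, smul_eq_mul, mul_one, mul_zero]
      rcases eq_or_lt_of_le ht with h1 | h1
      · rw [if_pos (by nlinarith)]
        rw [abs_of_nonneg (by linarith)]
        norm_num
        rw [max_eq_right (by linarith)]
        linarith
      · rw [if_neg (by nlinarith)]
        rw [abs_of_nonneg (by linarith)]
        norm_num
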